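/- A language L ⊆ Σ* is weakly acyclic if and only if L belongs to the smallest family C of languages over Σ such that: ∅ ∈ C; Γ* ∈ C for every subset Γ ⊆ Σ; C is closed under binary union; and for every Λ ⊆ Σ, every a ∈ Σ \ Λ, and every M ∈ C, the language Λ*·a·M = {u a v : u ∈ Λ*, v ∈ M} belongs to C. (Equivalently, a language is weakly acyclic iff it is described by a weakly acyclic expression r ::= ∅ | Γ* | Λ* a r | r + r with a ∉ Λ.) -/

import Mathlib

/-- A DFA is *weakly acyclic* if whenever a nonempty word `w` loops on a state `q`,
every letter occurring in `w` self-loops on `q`. -/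
def DFA.WeaklyAcyclic {α : Type*} {σ : Type*} (A : DFA α σ) : Prop :=
  ∀ (q : σ) (w : List α), w ≠ [] → A.evalFrom q w = q → ∀ a ∈ w, A.step q a = q

/-- A language is weakly acyclic if it is accepted by some weakly acyclic DFA
with finitely many states. -/
def Language.IsWeaklyAcyclic {α : Type*} (L : Language α) : Prop :=
  ∃ (σ : Type) (_ : Fintype σ) (A : DFA α σ), A.WeaklyAcyclic ∧ A.accepts = L

/-- The residual of the language `L` with respect to the word `u`. -/
def Language.residual {α : Type*} (L : Language α) (u : List α) : Language α :=
  {v | u ++ v ∈ L}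

/-- The smallest family of languages containing `∅` and `Γ*` (for every `Γ ⊆ Σ`),
closed under binary union, and closed under `M ↦ Λ*·a·M` for `a ∉ Λ`
(i.e. languages of weakly acyclic expressions). -/
inductive WAExpr {α : Type*} : Language α → Prop
  | empty : WAExpr (⊥ : Language α)
  | star (Γ : Set α) : WAExpr {w | ∀ a ∈ w, a ∈ Γ}
  | cat (Λ : Set α) (a : α) (ha : a ∉ Λ) (M : Language α) (hM : WAExpr M) :
      WAExpr {w | ∃ u v, (∀ b ∈ u, b ∈ Λ) ∧ v ∈ M ∧ w = u ++ a :: v}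
  | union (K L : Language α) : WAExpr K → WAExpr L → WAExpr (K ⊔ L)

namespace WAProof

variable {α : Type}

lemma mem_sup {K L : Language α} {w : List α} : w ∈ K ⊔ L ↔ w ∈ K ∨ w ∈ L := Iff.rfl

lemma evalFrom_cons {σ : Type*} (A : DFA α σ) (q : σ) (b : α) (rest : List α) :
    A.evalFrom q (b :: rest) = A.evalFrom (A.step q b) rest := rfl

lemma wa_empty : (⊥ : Language α).IsWeaklyAcyclic := by
  refine ⟨Unit, inferInstance, ⟨fun _ _ => (), (), ∅⟩, fun _ _ _ _ _ _ => rfl, ?_⟩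
  ext w
  simp [DFA.mem_accepts]
  exact fun h => h

lemma wa_star (Γ : Set α) : Language.IsWeaklyAcyclic {w | ∀ a ∈ w, a ∈ Γ} := by
  classical
  let A : DFA α Bool := ⟨fun b a => b && decide (a ∈ Γ), true, {true}⟩
  have hfalse : ∀ w, A.evalFrom false w = false := by
    intro w; induction w with
    | nil => rfl
    | cons b rest ih => rw [evalFrom_cons]; simpa [A] using ih
  have htrue : ∀ w, A.evalFrom true w = true ↔ ∀ a ∈ w, a ∈ Γ := by
    intro w; induction w with
    | nil => simp
    | cons b rest ih =>
      by_cases hb : b ∈ Γ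
      · rw [evalFrom_cons]
        have : A.step true b = true := by simp [A, hb]
        rw [this, ih]
        simp [hb]
      · rw [evalFrom_cons]
        have : A.step true b = false := by simp [A, hb]
        rw [this, hfalse]
        simp [hb]
  refine ⟨Bool, inferInstance, A, ?_, ?_⟩
  · intro q w hw hloop a ha
    cases q with
    | false => simp [A]
    | true =>
      have := (htrue w).mp hloop a ha
      simp [A, this]
  · ext w
    simp only [DFA.mem_accepts, DFA.eval]
    show A.evalFrom true w ∈ ({true} : Set Bool) ↔ _
    rw [Set.mem_singleton_iff, htrue w]
    exact Iff.rfl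

lemma wa_union {K L : Language α} (hK : K.IsWeaklyAcyclic) (hL : L.IsWeaklyAcyclic) :
    (K ⊔ L).IsWeaklyAcyclic := by
  obtain ⟨σ₁, i₁, A₁, hwa₁, hacc₁⟩ := hK
  obtain ⟨σ₂, i₂, A₂, hwa₂, hacc₂⟩ := hL
  haveI := i₁; haveI := i₂
  let B : DFA α (σ₁ × σ₂) :=
    ⟨fun p a => (A₁.step p.1 a, A₂.step p.2 a), (A₁.start, A₂.start),
     {p | p.1 ∈ A₁.accept ∨ p.2 ∈ A₂.accept}⟩
  have hev : ∀ w (p : σ₁ × σ₂), B.evalFrom p w = (A₁.evalFrom p.1 w, A₂.evalFrom p.2 w) := by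
    intro w; induction w with
    | nil => intro p; rfl
    | cons b rest ih => intro p; rw [evalFrom_cons, ih]; rfl
  refine ⟨σ₁ × σ₂, inferInstance, B, ?_, ?_⟩
  · intro q w hw hloop a ha
    rw [hev] at hloop
    have h1 : A₁.evalFrom q.1 w = q.1 := congrArg Prod.fst hloop
    have h2 : A₂.evalFrom q.2 w = q.2 := congrArg Prod.snd hloop
    have := hwa₁ q.1 w hw h1 a ha
    have := hwa₂ q.2 w hw h2 a ha
    show (A₁.step q.1 a, A₂.step q.2 a) = q
    simp_all
  · ext w
    rw [mem_sup, ← hacc₁, ← hacc₂]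
    show B.evalFrom B.start w ∈ B.accept ↔ _
    rw [hev]
    rfl

lemma wa_cat (Λ : Set α) (a : α) (ha : a ∉ Λ) {M : Language α} (hM : M.IsWeaklyAcyclic) :
    Language.IsWeaklyAcyclic {w | ∃ u v, (∀ b ∈ u, b ∈ Λ) ∧ v ∈ M ∧ w = u ++ a :: v} := by
  classical
  obtain ⟨σ, iσ, A, hwa, hacc⟩ := hM
  haveI := iσ
  let B : DFA α (Unit ⊕ Option σ) :=
    ⟨fun s b => match s with
      | .inl _ => if b ∈ Λ then .inl () else if b = a then .inr (some A.start) else .inr none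
      | .inr none => .inr none
      | .inr (some q) => .inr (some (A.step q b)),
     .inl (), {s | ∃ q ∈ A.accept, s = .inr (some q)}⟩
  have hdead : ∀ w, B.evalFrom (.inr none) w = .inr none := by
    intro w; induction w with
    | nil => rfl
    | cons b rest ih => rw [evalFrom_cons]; exact ih
  have hsome : ∀ w (q : σ), B.evalFrom (.inr (some q)) w = .inr (some (A.evalFrom q w)) := by
    intro w; induction w with
    | nil => intro q; rfl
    | cons b rest ih => intro q; rw [evalFrom_cons]; exact ih _
  have hinr : ∀ w (x : Option σ), ∃ y, B.evalFrom (.inr x) w = .inr y := by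
    intro w x
    cases x with
    | none => exact ⟨none, hdead w⟩
    | some q => exact ⟨some (A.evalFrom q w), hsome w q⟩
  have hΛ : ∀ w, (∀ b ∈ w, b ∈ Λ) → B.evalFrom (.inl ()) w = .inl () := by
    intro w; induction w with
    | nil => intro _; rfl
    | cons b rest ih =>
      intro hb
      rw [evalFrom_cons]
      have : B.step (.inl ()) b = .inl () := by
        simp [B, hb b List.mem_cons_self]
      rw [this]
      exact ih fun c hc => hb c (List.mem_cons_of_mem _ hc)
  have hloopI : ∀ w, B.evalFrom (.inl ()) w = .inl () → ∀ b ∈ w, b ∈ Λ := by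
    intro w; induction w with
    | nil => intro _ b hb; simp at hb
    | cons b rest ih =>
      intro hl c hc
      by_cases hb : b ∈ Λ
      · have hstep : B.step (.inl ()) b = .inl () := by simp [B, hb]
        rw [evalFrom_cons, hstep] at hl
        rcases List.mem_cons.mp hc with rfl | hc
        · exact hb
        · exact ih hl c hc
      · exfalso
        have hstep : ∃ x, B.step (.inl ()) b = .inr x := by
          by_cases hba : b = a
          · exact ⟨some A.start, by simp [B, hb, hba, ha]⟩
          · exact ⟨none, by simp [B, hb, hba, ha]⟩
        obtain ⟨x, hx⟩ := hstep
        rw [evalFrom_cons, hx] at hl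
        obtain ⟨y, hy⟩ := hinr rest x
        rw [hy] at hl
        exact Sum.inr_ne_inl hl
  refine ⟨Unit ⊕ Option σ, inferInstance, B, ?_, ?_⟩
  · intro q w hw hloop c hc
    match q with
    | .inl () =>
      have := hloopI w hloop c hc
      simp [B, this]
    | .inr none => rfl
    | .inr (some p) =>
      rw [hsome] at hloop
      have : A.evalFrom p w = p := by
        simpa using hloop
      have := hwa p w hw this c hc
      show Sum.inr (some (A.step p c)) = _
      rw [this]
  · ext w
    show B.evalFrom (.inl ()) w ∈ B.accept ↔ _
    constructor
    · intro hw
      induction w with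
      | nil =>
        exfalso
        obtain ⟨q, -, hq⟩ := hw
        exact Sum.inl_ne_inr hq
      | cons b rest ih =>
        by_cases hb : b ∈ Λ
        · have hstep : B.step (.inl ()) b = .inl () := by simp [B, hb]
          rw [evalFrom_cons, hstep] at hw
          obtain ⟨u, v, hu, hv, hrest⟩ := ih hw
          exact ⟨b :: u, v, by
            intro c hc
            rcases List.mem_cons.mp hc with rfl | hc
            · exact hb
            · exact hu c hc, hv, by rw [hrest]; rfl⟩
        · by_cases hba : b = a
          · subst hba
            have hstep : B.step (.inl ()) b = .inr (some A.start) := by simp [B, hb]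
            rw [evalFrom_cons, hstep, hsome] at hw
            obtain ⟨q, hq, heq⟩ := hw
            have : A.evalFrom A.start rest = q := by
              simpa using heq
            refine ⟨[], rest, by simp, ?_, rfl⟩
            rw [← hacc]
            show A.evalFrom A.start rest ∈ A.accept
            rw [this]; exact hq
          · exfalso
            have hstep : B.step (.inl ()) b = .inr none := by simp [B, hb, hba]
            rw [evalFrom_cons, hstep, hdead] at hw
            obtain ⟨q, -, hq⟩ := hw
            simp at hq
    · rintro ⟨u, v, hu, hv, rfl⟩
      rw [DFA.evalFrom_of_append, hΛ u hu, evalFrom_cons]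
      have hstep : B.step (.inl ()) a = .inr (some A.start) := by simp [B, ha]
      rw [hstep, hsome]
      rw [← hacc] at hv
      exact ⟨_, hv, rfl⟩

section Forward

variable {α σ : Type} [Fintype α] [Fintype σ]
set_option linter.unusedSectionVars false

def Reach (A : DFA α σ) (q : σ) : Set σ := {p | ∃ w, A.evalFrom q w = p}

lemma evalFrom_all_loop (A : DFA α σ) (q : σ) (u : List α) (h : ∀ b ∈ u, A.step q b = q) :
    A.evalFrom q u = q := by
  induction u with
  | nil => rfl
  | cons b rest ih =>
    rw [evalFrom_cons, h b List.mem_cons_self]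
    exact ih fun c hc => h c (List.mem_cons_of_mem _ hc)

lemma reach_lt (A : DFA α σ) (hwa : A.WeaklyAcyclic) (q : σ) (a : α) (ha : A.step q a ≠ q) :
    (Reach A (A.step q a)).ncard < (Reach A q).ncard := by
  apply Set.ncard_lt_ncard _ (Set.toFinite _)
  rw [Set.ssubset_def]
  constructor
  · rintro p ⟨w, hw⟩
    exact ⟨a :: w, hw⟩
  · intro hsub
    have hq : q ∈ Reach A q := ⟨[], rfl⟩
    obtain ⟨w, hw⟩ := hsub hq
    exact ha (hwa q (a :: w) (List.cons_ne_nil _ _) hw a List.mem_cons_self)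

lemma decomp (A : DFA α σ) (q : σ) :
    A.acceptsFrom q =
      ({w | q ∈ A.accept ∧ ∀ b ∈ w, A.step q b = q} : Language α) ⊔
      {w | ∃ c, A.step q c ≠ q ∧
        ∃ u v, (∀ b ∈ u, A.step q b = q) ∧ v ∈ A.acceptsFrom (A.step q c) ∧ w = u ++ c :: v} := by
  ext w
  erw [mem_sup]
  constructor
  · intro h
    induction w with
    | nil =>
      left
      have hq : q ∈ A.accept := h
      exact ⟨hq, fun b hb => absurd hb (by simp)⟩
    | cons b rest ih =>
      by_cases hb : A.step q b = q
      · have hrest : rest ∈ A.acceptsFrom q := by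
          show A.evalFrom q rest ∈ A.accept
          have h' : A.evalFrom q (b :: rest) ∈ A.accept := h
          rwa [evalFrom_cons, hb] at h'
        rcases ih hrest with hbase | ⟨c, hc, u, v, hu, hv, hrest'⟩
        · left
          refine ⟨hbase.1, ?_⟩
          intro d hd
          rcases List.mem_cons.mp hd with rfl | hd
          · exact hb
          · exact hbase.2 d hd
        · right
          refine ⟨c, hc, b :: u, v, ?_, hv, by rw [hrest']; rfl⟩
          intro d hd
          rcases List.mem_cons.mp hd with rfl | hd
          · exact hb
          · exact hu d hd
      · right
        refine ⟨b, hb, [], rest, by simp, ?_, rfl⟩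
        show A.evalFrom (A.step q b) rest ∈ A.accept
        have h' : A.evalFrom q (b :: rest) ∈ A.accept := h
        rwa [evalFrom_cons] at h'
  · rintro (⟨hq, hbase⟩ | ⟨c, hc, u, v, hu, hv, rfl⟩)
    · show A.evalFrom q w ∈ A.accept
      rw [evalFrom_all_loop A q w hbase]
      exact hq
    · show A.evalFrom q (u ++ c :: v) ∈ A.accept
      rw [DFA.evalFrom_of_append, evalFrom_all_loop A q u hu, evalFrom_cons]
      exact hv

lemma waexpr_exists_mem {β : Type} [DecidableEq β] (s : Finset β) (f : β → Language α)
    (h : ∀ b ∈ s, WAExpr (f b)) : WAExpr {w | ∃ b ∈ s, w ∈ f b} := by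
  induction s using Finset.induction_on with
  | empty =>
    have he : {w : List α | ∃ b ∈ (∅ : Finset β), w ∈ f b} = (⊥ : Language α) := by
      ext w
      constructor
      · rintro ⟨b, hb, -⟩; simp at hb
      · intro hw; exact hw.elim
    rw [he]; exact WAExpr.empty
  | @insert c s hc ih =>
    have he : {w : List α | ∃ b ∈ insert c s, w ∈ f b}
        = f c ⊔ {w | ∃ b ∈ s, w ∈ f b} := by
      ext w
      erw [mem_sup]
      constructor
      · rintro ⟨b, hb, hw⟩
        rcases Finset.mem_insert.mp hb with rfl | hb
        · exact Or.inl hw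
        · exact Or.inr ⟨b, hb, hw⟩
      · rintro (hw | ⟨b, hb, hw⟩)
        · exact ⟨c, Finset.mem_insert_self _ _, hw⟩
        · exact ⟨b, Finset.mem_insert_of_mem hb, hw⟩
    rw [he]
    exact WAExpr.union _ _ (h c (Finset.mem_insert_self _ _))
      (ih fun b hb => h b (Finset.mem_insert_of_mem hb))

lemma waexpr_acceptsFrom (A : DFA α σ) (hwa : A.WeaklyAcyclic) :
    ∀ (n : ℕ) (q : σ), (Reach A q).ncard < n → WAExpr (A.acceptsFrom q) := by
  intro n
  induction n with
  | zero => intro q h; omega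
  | succ n ih =>
    intro q hq
    rw [decomp A q]
    apply WAExpr.union
    · by_cases h : q ∈ A.accept
      · have he : ({w | q ∈ A.accept ∧ ∀ b ∈ w, A.step q b = q} : Language α)
            = {w | ∀ b ∈ w, A.step q b = q} := by
          ext w
          exact ⟨fun hw => hw.2, fun hw => ⟨h, hw⟩⟩
        rw [he]
        exact WAExpr.star {b | A.step q b = q}
      · have he : ({w | q ∈ A.accept ∧ ∀ b ∈ w, A.step q b = q} : Language α)
            = (⊥ : Language α) := by
          ext w
          exact ⟨fun hw => absurd hw.1 h, fun hw => hw.elim⟩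
        rw [he]
        exact WAExpr.empty
    · classical
      have key : {w : List α | ∃ c, A.step q c ≠ q ∧ ∃ u v, (∀ b ∈ u, A.step q b = q) ∧
            v ∈ A.acceptsFrom (A.step q c) ∧ w = u ++ c :: v}
          = {w | ∃ c ∈ (Finset.univ : Finset α), w ∈ (fun c =>
              if A.step q c = q then (⊥ : Language α) else
                {w | ∃ u v, (∀ b ∈ u, A.step q b = q) ∧
                  v ∈ A.acceptsFrom (A.step q c) ∧ w = u ++ c :: v}) c} := by
        ext w
        simp only [Finset.mem_univ, true_and, Set.mem_setOf_eq]
        constructor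
        · rintro ⟨c, hc, hrest⟩
          exact ⟨c, by erw [if_neg hc]; exact hrest⟩
        · rintro ⟨c, hrest⟩
          by_cases hc : A.step q c = q
          · erw [if_pos hc] at hrest
            exact hrest.elim
          · erw [if_neg hc] at hrest
            exact ⟨c, hc, hrest⟩
      rw [key]
      apply waexpr_exists_mem
      intro c _
      by_cases hc : A.step q c = q
      · erw [if_pos hc]
        exact WAExpr.empty
      · erw [if_neg hc]
        have hlt : (Reach A (A.step q c)).ncard < n := by
          have := reach_lt A hwa q c hc
          omega
        exact WAExpr.cat {b | A.step q b = q} c hc _ (ih _ hlt)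

end Forward

end WAProof

/-- A language is weakly acyclic iff it is described by a weakly acyclic expression. -/
theorem weaklyAcyclic_iff_expr {α : Type} [Fintype α] (L : Language α) :
    L.IsWeaklyAcyclic ↔ WAExpr L := by
  constructor
  · rintro ⟨σ, iσ, A, hwa, rfl⟩
    haveI := iσ
    exact WAProof.waexpr_acceptsFrom A hwa ((WAProof.Reach A A.start).ncard + 1) A.start
      (Nat.lt_succ_self _)
  · intro h
    induction h with
    | empty => exact WAProof.wa_empty
    | star Γ => exact WAProof.wa_star Γ
    | cat Λ a ha M hM ih => exact WAProof.wa_cat Λ a ha ih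
    | union K L hK hL ihK ihL => exact WAProof.wa_union ihK ihL
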